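/- Let K be a field, m, n natural numbers, and I an ideal of K[X_1,...,X_m]. Then dim_K K[X_1,...,X_m]/I ≤ n if and only if every n+1 monomials of total degree at most n are linearly dependent modulo I. -/
import Mathlib

open MvPolynomial Submodule Set Cardinal

namespace Stmt9Aux

variable {K : Type} [Field K] {m : ℕ} (I : Ideal (MvPolynomial (Fin m) K))

/-- total degree of an exponent vector -/
def deg (s : Fin m →₀ ℕ) : ℕ := s.sum fun _ e => e

lemma deg_add (s t : Fin m →₀ ℕ) : deg (s + t) = deg s + deg t :=
  Finsupp.sum_add_index' (fun _ => rfl) (fun _ _ _ => rfl)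

lemma deg_single (i : Fin m) : deg (Finsupp.single i (1 : ℕ)) = 1 := by
  simp [deg]

/-- the span of the images of the monomials of degree at most `k` -/
noncomputable def W (k : ℕ) : Submodule K (MvPolynomial (Fin m) K ⧸ I) :=
  span K ((fun s => Ideal.Quotient.mk I (monomial s (1 : K))) '' {s | deg s ≤ k})

lemma W_mono {k l : ℕ} (h : k ≤ l) : W I k ≤ W I l :=
  span_mono (image_mono fun _ hs => le_trans hs h)

lemma mem_W {s : Fin m →₀ ℕ} {k : ℕ} (h : deg s ≤ k) :
    Ideal.Quotient.mk I (monomial s (1 : K)) ∈ W I k :=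
  subset_span ⟨s, h, rfl⟩

lemma mk_smul (c : K) (q : MvPolynomial (Fin m) K) :
    Ideal.Quotient.mk I (c • q) = c • Ideal.Quotient.mk I q := by
  exact Submodule.Quotient.mk_smul I c q

lemma mul_X_mem_W {k : ℕ} (i : Fin m) {x : MvPolynomial (Fin m) K ⧸ I} (hx : x ∈ W I k) :
    Ideal.Quotient.mk I (monomial (Finsupp.single i 1) (1 : K)) * x ∈ W I (k + 1) := by
  have hmap : (LinearMap.mulLeft K (Ideal.Quotient.mk I (monomial (Finsupp.single i 1) (1 : K)))) x
      ∈ Submodule.map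
        (LinearMap.mulLeft K (Ideal.Quotient.mk I (monomial (Finsupp.single i 1) (1 : K))))
        (W I k) := Submodule.mem_map_of_mem hx
  rw [W, Submodule.map_span] at hmap
  refine span_le.2 ?_ hmap
  rintro _ ⟨_, ⟨t, ht, rfl⟩, rfl⟩
  have ht' : deg t ≤ k := ht
  have heq : (LinearMap.mulLeft K (Ideal.Quotient.mk I (monomial (Finsupp.single i 1) (1 : K))))
      (Ideal.Quotient.mk I (monomial t (1 : K)))
      = Ideal.Quotient.mk I (monomial (Finsupp.single i 1 + t) (1 : K)) := by
    simp [LinearMap.mulLeft_apply, ← map_mul, monomial_mul]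
  simp only [SetLike.mem_coe]
  rw [heq]
  refine mem_W I ?_
  rw [deg_add, deg_single]
  omega

lemma W_step {k : ℕ} (h : W I (k + 1) ≤ W I k) : W I (k + 2) ≤ W I (k + 1) := by
  rw [W, span_le]
  rintro _ ⟨s, hs, rfl⟩
  simp only [SetLike.mem_coe]
  have hsk : deg s ≤ k + 2 := hs
  by_cases hd : deg s ≤ k + 1
  · exact mem_W I hd
  · have hs0 : s ≠ 0 := by rintro rfl; simp [deg] at hd
    obtain ⟨i, hi⟩ := Finsupp.support_nonempty_iff.2 hs0
    have hi' : s i ≠ 0 := Finsupp.mem_support_iff.1 hi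
    have hle : Finsupp.single i 1 ≤ s := Finsupp.single_le_iff.2 (by omega)
    set s' := s - Finsupp.single i 1 with hs'
    have hsum : s' + Finsupp.single i 1 = s := tsub_add_cancel_of_le hle
    have hdeg' : deg s' ≤ k + 1 := by
      have h2 := deg_add s' (Finsupp.single i 1)
      rw [hsum, deg_single] at h2
      omega
    have hmem : Ideal.Quotient.mk I (monomial s' (1 : K)) ∈ W I k := h (mem_W I hdeg')
    have hfin := mul_X_mem_W I i hmem
    rwa [← map_mul, monomial_mul, one_mul, add_comm (Finsupp.single i 1) s', hsum] at hfin

lemma W_chain {k : ℕ} (h : W I (k + 1) ≤ W I k) : ∀ j, W I (k + j) ≤ W I k := by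
  have hstep : ∀ j, W I (k + j + 1) ≤ W I (k + j) := by
    intro j
    induction j with
    | zero => exact h
    | succ j ih => exact W_step I ih
  intro j
  induction j with
  | zero => exact le_rfl
  | succ j ih => exact le_trans (hstep j) ih

lemma mem_W_totalDegree (p : MvPolynomial (Fin m) K) :
    Ideal.Quotient.mk I p ∈ W I p.totalDegree := by
  have hrepr : Ideal.Quotient.mk I p
      = ∑ v ∈ p.support, coeff v p • Ideal.Quotient.mk I (monomial v (1 : K)) := by
    conv_lhs => rw [p.as_sum]
    rw [map_sum]
    refine Finset.sum_congr rfl fun s _ => ?_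
    have h1 : (monomial s (coeff s p)) = coeff s p • monomial s (1 : K) := by
      rw [smul_monomial, smul_eq_mul, mul_one]
    rw [h1, mk_smul]
  rw [hrepr]
  exact Submodule.sum_mem _ fun s hs =>
    Submodule.smul_mem _ _ (mem_W I (le_totalDegree hs))

lemma W_top {k : ℕ} (h : W I (k + 1) ≤ W I k) : W I k = ⊤ := by
  rw [eq_top_iff]
  intro x _
  obtain ⟨p, rfl⟩ := Ideal.Quotient.mk_surjective (I := I) x
  rcases le_or_gt p.totalDegree k with hle | hlt
  · exact W_mono I hle (mem_W_totalDegree I p)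
  · have heq : p.totalDegree = k + (p.totalDegree - k) := by omega
    exact W_chain I h (p.totalDegree - k) (heq ▸ mem_W_totalDegree I p)

end Stmt9Aux

open Stmt9Aux Submodule Set Cardinal in
/-- Let `K` be a field, `I` an ideal of `K[X₁,…,Xₘ]` and `n` a natural number.  Then
`dim_K K[X₁,…,Xₘ]/I ≤ n` if and only if any `n+1` monomials of total degree at most `n` are
linearly dependent modulo `I`. -/
theorem stmt_9 (K : Type) [Field K] (m n : ℕ) (I : Ideal (MvPolynomial (Fin m) K)) :
    Module.rank K (MvPolynomial (Fin m) K ⧸ I) ≤ n ↔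
      ∀ d : Fin (n + 1) → (Fin m →₀ ℕ), (∀ i, (d i).sum (fun _ e => e) ≤ n) →
        ¬ LinearIndependent K
          (fun i => Ideal.Quotient.mk I (MvPolynomial.monomial (d i) (1 : K))) := by
  constructor
  · intro hrank d _ hindep
    have h1 := hindep.cardinal_le_rank
    rw [Cardinal.mk_fin] at h1
    have h2 : ((n + 1 : ℕ) : Cardinal) ≤ (n : Cardinal) := le_trans h1 hrank
    rw [Nat.cast_le] at h2
    omega
  · intro H
    -- Step 1: there is a `k ≤ n` with `W I (k+1) ≤ W I k`.
    have hstab : ∃ k ≤ n, W I (k + 1) ≤ W I k := by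
      by_contra hcon
      push_neg at hcon
      -- for each `k ≤ n` pick a monomial of degree `≤ k+1` not in `W I k`
      have hpick : ∀ k, ∃ s : Fin m →₀ ℕ, k ≤ n → deg s ≤ k + 1 ∧
          Ideal.Quotient.mk I (MvPolynomial.monomial s (1 : K)) ∉ W I k := by
        intro k
        by_cases hk : k ≤ n
        · have hlt := hcon k hk
          by_contra hall
          push_neg at hall
          refine hlt ?_
          rw [W, span_le]
          rintro _ ⟨s, hs, rfl⟩
          simp only [SetLike.mem_coe]
          exact (hall s).2 hs
        · exact ⟨0, fun h => absurd h hk⟩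
      choose f hf using hpick
      -- the quotient is nontrivial
      have hne : (1 : MvPolynomial (Fin m) K ⧸ I) ≠ 0 := by
        intro h10
        refine hcon 0 (Nat.zero_le n) ?_
        have hsub : Subsingleton (MvPolynomial (Fin m) K ⧸ I) :=
          subsingleton_of_zero_eq_one h10.symm
        intro x _
        rw [Subsingleton.elim x 0]
        exact zero_mem _
      set d : ℕ → (Fin m →₀ ℕ) := fun k => match k with
        | 0 => 0
        | j + 1 => f j with hdDef
      have hdeg : ∀ k, k ≤ n → deg (d k) ≤ k := by
        intro k hk
        match k with
        | 0 => simp [hdDef, deg]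
        | j + 1 => exact (hf j (by omega)).1
      have hnot : ∀ j, j ≤ n →
          Ideal.Quotient.mk I (MvPolynomial.monomial (d (j + 1)) (1 : K)) ∉ W I j :=
        fun j hj => (hf j hj).2
      set u : ℕ → (MvPolynomial (Fin m) K ⧸ I) :=
        fun k => Ideal.Quotient.mk I (MvPolynomial.monomial (d k) (1 : K)) with hu
      have hu0 : u 0 = 1 := by
        simp [hu, hdDef, monomial_zero']
      have key : ∀ j, j ≤ n + 1 → LinearIndependent K (fun i : Fin j => u i) := by
        intro j
        induction j with
        | zero => exact fun _ => linearIndependent_empty_type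
        | succ j ih =>
          intro hj
          have hprev := ih (by omega)
          have hjn : j ≤ n := by omega
          have hnotmem : u j ∉ Submodule.span K (Set.range fun i : Fin j => u i) := by
            rcases Nat.eq_zero_or_pos j with rfl | hjpos
            · intro hmem
              rw [Set.range_eq_empty, span_empty, Submodule.mem_bot] at hmem
              rw [hu0] at hmem
              exact hne hmem
            · obtain ⟨i, rfl⟩ := Nat.exists_eq_succ_of_ne_zero (by omega : j ≠ 0)
              intro hmem
              have hrange : Submodule.span K (Set.range fun l : Fin (i + 1) => u l) ≤ W I i := by
                rw [span_le]
                rintro _ ⟨l, rfl⟩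
                have hli : (l : ℕ) ≤ i := by have := l.isLt; omega
                simp only [SetLike.mem_coe, hu]
                exact W_mono I hli (mem_W I (hdeg l (by omega)))
              exact hnot i (by omega) (hrange hmem)
          have hsnoc : LinearIndependent K (Fin.snoc (fun i : Fin j => u i) (u j) :
              Fin (j + 1) → _) :=
            linearIndependent_fin_snoc.2 ⟨hprev, hnotmem⟩
          have heq : (fun i : Fin (j + 1) => u i) =
              (Fin.snoc (fun i : Fin j => u i) (u j) : Fin (j + 1) → _) := by
            funext i
            refine Fin.lastCases ?_ (fun i => ?_) i
            · simp [Fin.snoc_last]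
            · simp [Fin.snoc_castSucc]
          rw [heq]
          exact hsnoc
      have hkey := key (n + 1) le_rfl
      refine H (fun i : Fin (n + 1) => d i) (fun i => ?_) hkey
      have hin : (i : ℕ) ≤ n := by have := i.isLt; omega
      exact le_trans (hdeg i hin) hin
    obtain ⟨k, hk, hstep⟩ := hstab
    have htop : W I n = ⊤ := by
      rw [eq_top_iff, ← W_top I hstep]
      exact W_mono I hk
    -- Step 2: extract a linearly independent spanning subset of the monomial set
    obtain ⟨t, hts, htspan, htindep⟩ := exists_linearIndependent K
      ((fun s => Ideal.Quotient.mk I (MvPolynomial.monomial s (1 : K))) '' {s | deg s ≤ n})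
    have htcard : #t ≤ (n : Cardinal) := by
      by_contra hlt
      push_neg at hlt
      have hle : ((n + 1 : ℕ) : Cardinal) ≤ #t := by
        push_cast
        exact le_trans (Cardinal.add_one_le_succ _) (Order.succ_le_of_lt hlt)
      rw [← Cardinal.mk_fin (n + 1), Cardinal.le_def] at hle
      obtain ⟨e⟩ := hle
      have hchoose : ∀ i : Fin (n + 1), ∃ s : Fin m →₀ ℕ, deg s ≤ n ∧
          Ideal.Quotient.mk I (MvPolynomial.monomial s (1 : K)) = (e i : _) := by
        intro i
        obtain ⟨s, hs, hse⟩ := hts (e i).2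
        exact ⟨s, hs, hse⟩
      choose dd hdd1 hdd2 using hchoose
      refine H dd hdd1 ?_
      have heq : (fun i => Ideal.Quotient.mk I (MvPolynomial.monomial (dd i) (1 : K))) =
          (fun x : t => (x : MvPolynomial (Fin m) K ⧸ I)) ∘ e := by
        funext i; exact hdd2 i
      rw [heq]
      exact htindep.comp e e.injective
    calc Module.rank K (MvPolynomial (Fin m) K ⧸ I)
        = Module.rank K (⊤ : Submodule K (MvPolynomial (Fin m) K ⧸ I)) := (rank_top K _).symm
      _ = Module.rank K (W I n) := by rw [htop]
      _ = Module.rank K (span K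
            ((fun s => Ideal.Quotient.mk I (MvPolynomial.monomial s (1 : K))) '' {s | deg s ≤ n}))
          := by rw [W]
      _ = Module.rank K (span K t) := by rw [htspan]
      _ ≤ #t := rank_span_le (R := K) t
      _ ≤ (n : Cardinal) := htcard
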